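/- The number of natural numbers n ≤ x whose square-free kernel s(n) satisfies s(n) ≤ n^(1/2+ε) is O(x^(3/4+ε/2)). -/

import Mathlib

/-- The largest `m` such that `m^2` divides `n`. -/
noncomputable def maxSqDiv (n : ℕ) : ℕ := Nat.findGreatest (fun m => m ^ 2 ∣ n) n

/-- The square-free kernel of `n`: `n / m^2` where `m^2` is the largest square dividing `n`. -/
noncomputable def sker (n : ℕ) : ℕ := n / (maxSqDiv n) ^ 2

lemma maxSqDiv_sq_dvd (n : ℕ) : (maxSqDiv n) ^ 2 ∣ n := by
  rcases Nat.eq_zero_or_pos n with h | h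
  · simp [h]
  · exact Nat.findGreatest_spec (P := fun m => m ^ 2 ∣ n) h (by simpa using one_dvd n)

lemma sker_mul (n : ℕ) : sker n * (maxSqDiv n) ^ 2 = n :=
  Nat.div_mul_cancel (maxSqDiv_sq_dvd n)

lemma one_le_maxSqDiv {n : ℕ} (hn : 1 ≤ n) : 1 ≤ maxSqDiv n :=
  Nat.le_findGreatest hn (by simpa using one_dvd n)

lemma sum_inv_sqrt (S : ℕ) :
    ∑ s ∈ Finset.Icc 1 S, (1 / Real.sqrt s) ≤ 2 * Real.sqrt S := by
  induction S with
  | zero => simp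
  | succ S ih =>
    rw [Finset.sum_Icc_succ_top (by omega)]
    have ha := Real.sq_sqrt (by positivity : (0:ℝ) ≤ (S:ℝ))
    have hb := Real.sq_sqrt (by positivity : (0:ℝ) ≤ ((S:ℝ)+1))
    have hbpos : 0 < Real.sqrt ((S:ℝ)+1) := Real.sqrt_pos.2 (by positivity)
    have hanneg : 0 ≤ Real.sqrt (S:ℝ) := Real.sqrt_nonneg _
    have key : 1 / Real.sqrt ((S:ℝ)+1)
        ≤ 2 * Real.sqrt ((S:ℝ)+1) - 2 * Real.sqrt (S:ℝ) := by
      rw [div_le_iff₀ hbpos]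
      nlinarith [sq_nonneg (Real.sqrt ((S:ℝ)+1) - Real.sqrt (S:ℝ))]
    push_cast
    linarith

theorem stmt1 (ε : ℝ) (hε : 0 < ε) :
    ∃ C : ℝ, 0 < C ∧ ∀ x : ℝ, 1 ≤ x →
      (((Finset.Icc 1 ⌊x⌋₊).filter
        (fun n => (sker n : ℝ) ≤ (n : ℝ) ^ ((1 : ℝ) / 2 + ε))).card : ℝ)
        ≤ C * x ^ ((3 : ℝ) / 4 + ε / 2) := by
  refine ⟨2, two_pos, fun x hx => ?_⟩
  have hx0 : (0:ℝ) < x := lt_of_lt_of_le one_pos hx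
  set N := ⌊x⌋₊ with hN
  set S := ⌊x ^ ((1:ℝ)/2 + ε)⌋₊ with hS
  set A := (Finset.Icc 1 N).filter
    (fun n => (sker n : ℝ) ≤ (n : ℝ) ^ ((1 : ℝ) / 2 + ε)) with hA
  -- basic facts about members of A
  have hmem : ∀ n ∈ A, 1 ≤ n ∧ n ≤ N ∧ (sker n : ℝ) ≤ (n : ℝ) ^ ((1:ℝ)/2 + ε) := by
    intro n hn
    rw [hA, Finset.mem_filter, Finset.mem_Icc] at hn
    exact ⟨hn.1.1, hn.1.2, hn.2⟩
  have hskerS : ∀ n ∈ A, sker n ∈ Finset.Icc 1 S := by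
    intro n hn
    obtain ⟨h1, h2, h3⟩ := hmem n hn
    have hnx : (n : ℝ) ≤ x := le_trans (Nat.cast_le.2 h2) (Nat.floor_le hx0.le)
    have h4 : (sker n : ℝ) ≤ x ^ ((1:ℝ)/2 + ε) :=
      h3.trans (Real.rpow_le_rpow (by positivity) hnx (by positivity))
    have hsker1 : 1 ≤ sker n := by
      rcases Nat.eq_zero_or_pos (sker n) with h | h
      · exfalso
        have h2 := sker_mul n
        rw [h, zero_mul] at h2
        omega
      · exact h
    exact Finset.mem_Icc.2 ⟨hsker1, Nat.le_floor h4⟩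
  have hsub : A ⊆ (Finset.Icc 1 S).biUnion
      (fun s => A.filter (fun n => sker n = s)) := by
    intro n hn
    exact Finset.mem_biUnion.2 ⟨sker n, hskerS n hn,
      Finset.mem_filter.2 ⟨hn, rfl⟩⟩
  have hcard : A.card ≤ ∑ s ∈ Finset.Icc 1 S, (A.filter (fun n => sker n = s)).card :=
    (Finset.card_le_card hsub).trans Finset.card_biUnion_le
  -- each fiber is small
  have hfiber : ∀ s ∈ Finset.Icc 1 S,
      (A.filter (fun n => sker n = s)).card ≤ Nat.sqrt (N / s) := by
    intro s hs
    have hs1 : 1 ≤ s := (Finset.mem_Icc.1 hs).1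
    have := Finset.card_le_card_of_injOn (s := A.filter (fun n => sker n = s))
      (t := Finset.Icc 1 (Nat.sqrt (N / s))) (fun n => maxSqDiv n)
      (by
        intro n hn
        rw [Finset.mem_coe, Finset.mem_filter] at hn
        rw [Finset.mem_coe]
        obtain ⟨h1, h2, h3⟩ := hmem n hn.1
        refine Finset.mem_Icc.2 ⟨one_le_maxSqDiv h1, ?_⟩
        rw [Nat.le_sqrt]
        have hmul := sker_mul n
        rw [hn.2] at hmul
        rw [Nat.le_div_iff_mul_le hs1]
        calc maxSqDiv n * maxSqDiv n * s = s * (maxSqDiv n) ^ 2 := by ring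
          _ = n := hmul
          _ ≤ N := h2)
      (by
        intro a ha b hb hab
        simp only [Finset.coe_filter, Set.mem_setOf_eq] at ha hb
        have h1 := sker_mul a
        have h2 := sker_mul b
        rw [ha.2] at h1; rw [hb.2] at h2
        rw [← h1, ← h2]
        exact congrArg (fun m => s * m ^ 2) hab)
    simpa using this
  -- pass to the reals
  have hcardR : (A.card : ℝ) ≤ ∑ s ∈ Finset.Icc 1 S, (Nat.sqrt (N / s) : ℝ) := by
    calc (A.card : ℝ) ≤ (∑ s ∈ Finset.Icc 1 S, (A.filter (fun n => sker n = s)).card : ℕ) := by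
          exact_mod_cast hcard
      _ = ∑ s ∈ Finset.Icc 1 S, ((A.filter (fun n => sker n = s)).card : ℝ) := by push_cast; rfl
      _ ≤ ∑ s ∈ Finset.Icc 1 S, (Nat.sqrt (N / s) : ℝ) := by
          apply Finset.sum_le_sum
          intro s hs
          exact_mod_cast hfiber s hs
  have hterm : ∀ s ∈ Finset.Icc 1 S,
      (Nat.sqrt (N / s) : ℝ) ≤ Real.sqrt x * (1 / Real.sqrt s) := by
    intro s hs
    have hs1 : 1 ≤ s := (Finset.mem_Icc.1 hs).1
    have hs0 : (0:ℝ) < (s : ℝ) := by exact_mod_cast hs1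
    have h1 : (Nat.sqrt (N / s) : ℝ) ≤ Real.sqrt ((N / s : ℕ) : ℝ) := by
      rw [Real.le_sqrt (by positivity) (by positivity)]
      exact_mod_cast Nat.sqrt_le' (N / s)
    have h2' : ((N / s : ℕ) : ℝ) ≤ x / s := by
      refine le_trans Nat.cast_div_le ?_
      gcongr
      exact Nat.floor_le hx0.le
    calc (Nat.sqrt (N / s) : ℝ) ≤ Real.sqrt ((N / s : ℕ) : ℝ) := h1
      _ ≤ Real.sqrt (x / s) := Real.sqrt_le_sqrt h2'
      _ = Real.sqrt x / Real.sqrt s := Real.sqrt_div hx0.le _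
      _ = Real.sqrt x * (1 / Real.sqrt s) := by ring
  have hsum : (A.card : ℝ) ≤ Real.sqrt x * (2 * Real.sqrt S) := by
    calc (A.card : ℝ) ≤ ∑ s ∈ Finset.Icc 1 S, (Nat.sqrt (N / s) : ℝ) := hcardR
      _ ≤ ∑ s ∈ Finset.Icc 1 S, Real.sqrt x * (1 / Real.sqrt s) :=
          Finset.sum_le_sum hterm
      _ = Real.sqrt x * ∑ s ∈ Finset.Icc 1 S, (1 / Real.sqrt s) := by
          rw [Finset.mul_sum]
      _ ≤ Real.sqrt x * (2 * Real.sqrt S) := by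
          apply mul_le_mul_of_nonneg_left (sum_inv_sqrt S) (Real.sqrt_nonneg x)
  have hSx : Real.sqrt S ≤ x ^ (((1:ℝ)/2 + ε) / 2) := by
    have : (S : ℝ) ≤ x ^ ((1:ℝ)/2 + ε) := Nat.floor_le (by positivity)
    calc Real.sqrt S ≤ Real.sqrt (x ^ ((1:ℝ)/2 + ε)) := Real.sqrt_le_sqrt this
      _ = (x ^ ((1:ℝ)/2 + ε)) ^ ((1:ℝ)/2) := Real.sqrt_eq_rpow _
      _ = x ^ (((1:ℝ)/2 + ε) * (1/2)) := by rw [← Real.rpow_mul hx0.le]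
      _ = x ^ (((1:ℝ)/2 + ε) / 2) := by ring_nf
  have hxr : Real.sqrt x = x ^ ((1:ℝ)/2) := Real.sqrt_eq_rpow x
  calc (A.card : ℝ) ≤ Real.sqrt x * (2 * Real.sqrt S) := hsum
    _ ≤ x ^ ((1:ℝ)/2) * (2 * x ^ (((1:ℝ)/2 + ε) / 2)) := by
        rw [← hxr]
        apply mul_le_mul_of_nonneg_left _ (Real.sqrt_nonneg x)
        exact mul_le_mul_of_nonneg_left hSx (by norm_num)
    _ = 2 * (x ^ ((1:ℝ)/2) * x ^ (((1:ℝ)/2 + ε) / 2)) := by ring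
    _ = 2 * x ^ ((1:ℝ)/2 + ((1:ℝ)/2 + ε) / 2) := by rw [← Real.rpow_add hx0]
    _ = 2 * x ^ ((3:ℝ)/4 + ε / 2) := by ring_nf
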